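/- arXiv:2402.00378 — 3 statements merged into one kernel-verified Lean document; each statement's English description precedes it below -/
import Mathlib

section
/- For all i ≥ 1 and d ≥ 1, λ_{2i}(A(i, d) + 1) = d + 1. -/
/-- `fstar f n = min {i : f^(i)(n) ≤ 1}`. -/
noncomputable def fstar (f : ℕ → ℕ) (n : ℕ) : ℕ := sInf {i | f^[i] n ≤ 1}

/-- The inverse-Ackermann-type functions: `lam 1 n = ⌊√n⌋`, `lam 2 n = ⌈log₂ n⌉`,
`lam (d) = (lam (d-2))*` for `d ≥ 3`. -/
noncomputable def lam : ℕ → ℕ → ℕ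
  | 0 => fun _ => 0
  | 1 => Nat.sqrt
  | 2 => Nat.clog 2
  | d + 3 => fstar (lam (d + 1))


/-- The Ackermann function: `A(0,j) = 2j`, `A(i,1) = 2`, `A(i,j) = A(i-1, A(i,j-1))`. -/
def Ack : ℕ → ℕ → ℕ
  | 0, j => 2 * j
  | _ + 1, 0 => 1
  | _ + 1, 1 => 2
  | i + 1, j + 2 => Ack i (Ack (i + 1) (j + 1))
termination_by i j => (i, j)


lemma ackZeroE (j : ℕ) : Ack 0 j = 2 * j := by rw [Ack]

lemma ackOneE (i : ℕ) : Ack (i+1) 1 = 2 := by rw [Ack]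

lemma ackStepE (i j : ℕ) : Ack (i+1) (j+2) = Ack i (Ack (i+1) (j+1)) := by rw [Ack]

lemma ackGeTwo : ∀ i d : ℕ, 1 ≤ d → 2 ≤ Ack i d := by
  intro i
  induction i with
  | zero => intro d hd; rw [ackZeroE]; omega
  | succ i ih =>
    intro d hd
    induction d with
    | zero => omega
    | succ j ihj =>
      match j with
      | 0 => rw [ackOneE]
      | j+1 =>
        rw [ackStepE]
        exact ih _ (by have := ihj (by omega); omega)

lemma ackOneEq : ∀ d : ℕ, 1 ≤ d → Ack 1 d = 2 ^ d := by
  intro d hd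
  induction d with
  | zero => omega
  | succ d ih =>
    match d with
    | 0 => rw [ackOneE]; norm_num
    | d+1 =>
      rw [ackStepE, ackZeroE, ih (by omega)]
      ring

lemma clog_pow_add_one (d : ℕ) : Nat.clog 2 (2 ^ d + 1) = d + 1 := by
  have h1 : Nat.clog 2 (2^d+1) ≤ d + 1 := by
    rw [Nat.clog_le_iff_le_pow one_lt_two]
    have h : 2^(d+1) = 2^d + 2^d := by rw [pow_succ]; omega
    have : 1 ≤ 2^d := Nat.one_le_two_pow
    omega
  have h2 : d < Nat.clog 2 (2^d+1) := by
    rw [Nat.lt_clog_iff_pow_lt one_lt_two]; omega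
  omega

lemma lam_two_gen (i : ℕ) (hi : 1 ≤ i) : lam (2 * i) 2 = 1 := by
  induction i with
  | zero => omega
  | succ i ih =>
    match i with
    | 0 =>
      show Nat.clog 2 2 = 1
      simpa using clog_pow_add_one 0
    | i+1 =>
      have key : lam (2 * (i + 2)) = fstar (lam (2 * (i + 1))) := by
        show lam ((2*i+1) + 3) = _
        rw [lam]
        norm_num [Nat.mul_add]
      rw [key]
      show sInf {k | (lam (2*(i+1)))^[k] 2 ≤ 1} = 1
      have hmem : 1 ∈ {k | (lam (2*(i+1)))^[k] 2 ≤ 1} := by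
        simp [Set.mem_setOf_eq, ih (by omega)]
      refine le_antisymm (Nat.sInf_le hmem) ?_
      rcases Nat.eq_zero_or_pos (sInf {k | (lam (2*(i+1)))^[k] 2 ≤ 1}) with h | h
      · have := Nat.sInf_mem (⟨1, hmem⟩ : Set.Nonempty _)
        rw [h] at this
        simp at this
      · exact h

theorem stmt_7 : ∀ i : ℕ, 1 ≤ i → ∀ d : ℕ, 1 ≤ d →
    lam (2 * i) (Ack i d + 1) = d + 1 := by
  intro i
  induction i with
  | zero => omega
  | succ i ih =>
    intro _ d hd
    match i with
    | 0 =>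
      show Nat.clog 2 (Ack 1 d + 1) = d + 1
      rw [ackOneEq d hd, clog_pow_add_one]
    | i+1 =>
      have hih := ih (by omega)
      have key : lam (2 * (i + 2)) = fstar (lam (2 * (i + 1))) := by
        show lam ((2*i+1) + 3) = _
        rw [lam]
        norm_num [Nat.mul_add]
      rw [key]
      set f := lam (2 * (i + 1)) with hf
      show sInf {k | f^[k] (Ack (i+2) d + 1) ≤ 1} = d + 1
      have hiter : ∀ k, k ≤ d - 1 → f^[k] (Ack (i+2) d + 1) = Ack (i+2) (d-k) + 1 := by
        intro k
        induction k with
        | zero => simp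
        | succ k ihk =>
          intro hk
          rw [Function.iterate_succ_apply', ihk (by omega)]
          have h2 : 2 ≤ d - k := by omega
          obtain ⟨m, hm⟩ : ∃ m, d - k = m + 2 := ⟨d - k - 2, by omega⟩
          have hdk : d - (k+1) = m + 1 := by omega
          rw [hm, hdk, ackStepE, hih _ (by have := ackGeTwo (i+1+1) (m+1) (by omega); omega)]
      have hf3 : f 3 = 2 := by
        have := hih 1 le_rfl
        rw [ackOneE] at this
        exact this
      have h3 : f^[d-1] (Ack (i+2) d + 1) = 3 := by
        rw [hiter (d-1) le_rfl, show d - (d-1) = 1 by omega, ackOneE]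
      have hd' : f^[d] (Ack (i+2) d + 1) = 2 := by
        obtain ⟨m, hm⟩ : ∃ m, d = m + 1 := ⟨d - 1, by omega⟩
        subst hm
        rw [Function.iterate_succ_apply']
        have h3' : f^[m] (Ack (i+2) (m+1) + 1) = 3 := by
          simpa using h3
        rw [h3', hf3]
      have hd1 : f^[d+1] (Ack (i+2) d + 1) = 1 := by
        rw [Function.iterate_succ_apply', hd']
        exact lam_two_gen (i+1) (by omega)
      have hmem : d + 1 ∈ {k | f^[k] (Ack (i+2) d + 1) ≤ 1} := by
        simp [Set.mem_setOf_eq, hd1]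
      refine le_antisymm (Nat.sInf_le hmem) ?_
      by_contra hlt
      push_neg at hlt
      have hm := Nat.sInf_mem (⟨d+1, hmem⟩ : Set.Nonempty _)
      set m := sInf {k | f^[k] (Ack (i+2) d + 1) ≤ 1} with hmdef
      have hmle : m ≤ d := by omega
      rcases Nat.lt_or_ge m d with h | h
      · have heq := hiter m (by omega)
        rw [Set.mem_setOf_eq, heq] at hm
        have := ackGeTwo (i+2) (d-m) (by omega)
        omega
      · have : m = d := by omega
        rw [Set.mem_setOf_eq, this, hd'] at hm
        omega
end

section
/- For all i ≥ 1 and d ≥ 1, A(i, d) = max{n : λ_{2i}(n) ≤ d}. -/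
/- auxiliary lemmas -/

lemma lam_succ (k : ℕ) : lam (2 * (k + 2)) = fstar (lam (2 * (k + 1))) := by
  have h1 : 2 * (k + 2) = (2 * k + 1) + 3 := by ring
  have h2 : (2 * k + 1) + 1 = 2 * (k + 1) := by ring
  rw [h1, lam, h2]

lemma ackOne (d : ℕ) : Ack 1 d = 2 ^ d := by
  induction d with
  | zero => rw [Ack]; norm_num
  | succ d ih =>
    match d, ih with
    | 0, _ => rw [Ack]; norm_num
    | d + 1, ih => rw [Ack, Ack, ih]; ring

lemma two_le_ack : ∀ i d, 1 ≤ d → 2 ≤ Ack i d := by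
  intro i
  induction i with
  | zero => intro d hd; rw [show Ack 0 d = 2 * d from by rw [Ack]]; omega
  | succ i ih =>
    intro d hd
    induction d with
    | zero => omega
    | succ d ihd =>
      match d, ihd with
      | 0, _ => rw [show Ack (i + 1) 1 = 2 from by rw [Ack]]
      | d + 1, ihd =>
        rw [show Ack (i + 1) (d + 1 + 1) = Ack i (Ack (i + 1) (d + 1)) from by rw [Ack]]
        exact ih _ (le_trans (by omega) (ihd (by omega)))

section fstarLemmas

variable {f : ℕ → ℕ} (H1 : ∀ m, m ≤ 1 → f m ≤ 1) (H2 : ∀ m, 2 ≤ m → f m < m)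

include H1 H2 in
lemma iter_decr : ∀ k n, f^[k] n ≤ 1 ∨ f^[k] n + k ≤ n := by
  intro k n
  induction k with
  | zero => exact Or.inr (by simp)
  | succ k ih =>
    rw [Function.iterate_succ_apply']
    rcases ih with h | h
    · exact Or.inl (H1 _ h)
    · by_cases h2 : f^[k] n ≤ 1
      · exact Or.inl (H1 _ h2)
      · right
        have := H2 (f^[k] n) (by omega)
        omega

include H1 H2 in
lemma iter_mem (n : ℕ) : f^[n] n ≤ 1 := by
  rcases iter_decr H1 H2 n n with h | h <;> omega

include H1 in
lemma iter_stay : ∀ m n, n ≤ 1 → f^[m] n ≤ 1 := by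
  intro m
  induction m with
  | zero => intro n h; simpa using h
  | succ m ih =>
    intro n h
    rw [Function.iterate_succ_apply']
    exact H1 _ (ih n h)

include H1 H2 in
lemma fstar_le_iff (n d : ℕ) : fstar f n ≤ d ↔ f^[d] n ≤ 1 := by
  constructor
  · intro h
    have hne : {i | f^[i] n ≤ 1}.Nonempty := ⟨n, iter_mem H1 H2 n⟩
    have hmem := Nat.sInf_mem hne
    have hk : f^[fstar f n] n ≤ 1 := hmem
    obtain ⟨m, hm⟩ := Nat.exists_eq_add_of_le h
    rw [hm, Nat.add_comm, Function.iterate_add_apply]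
    exact iter_stay H1 m _ hk
  · intro h
    exact Nat.sInf_le h

include H1 H2 in
lemma fstar_small (n : ℕ) (h : n ≤ 1) : fstar f n ≤ 1 := by
  have : fstar f n ≤ 0 := Nat.sInf_le (by simpa using h)
  omega

include H1 H2 in
lemma fstar_lt (n : ℕ) (h : 2 ≤ n) : fstar f n < n := by
  have : fstar f n ≤ n - 1 := by
    apply Nat.sInf_le
    rcases iter_decr H1 H2 (n - 1) n with h' | h' <;> simp only [Set.mem_setOf_eq] <;> omega
  omega

end fstarLemmas

lemma clog_two_lt (m : ℕ) (hm : 2 ≤ m) : Nat.clog 2 m < m := by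
  have h1 : m ≤ 2 ^ (m - 1) := by
    have := Nat.lt_two_pow_self (n := m - 1)
    omega
  have := (Nat.clog_le_iff_le_pow (by norm_num)).mpr h1
  omega

lemma lam_prop : ∀ i : ℕ, (∀ m, m ≤ 1 → lam (2 * (i + 1)) m ≤ 1) ∧
    (∀ m, 2 ≤ m → lam (2 * (i + 1)) m < m) := by
  intro i
  induction i with
  | zero =>
    constructor
    · intro m hm
      interval_cases m <;> simp [lam, Nat.clog]
    · intro m hm
      exact clog_two_lt m hm
  | succ i ih =>
    rw [lam_succ i]
    exact ⟨fun m hm => fstar_small ih.1 ih.2 m hm, fun m hm => fstar_lt ih.1 ih.2 m hm⟩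

lemma key : ∀ i d, 1 ≤ d → ∀ n, (lam (2 * (i + 1)) n ≤ d ↔ n ≤ Ack (i + 1) d) := by
  intro i
  induction i with
  | zero =>
    intro d _ n
    have : lam (2 * 1) n = Nat.clog 2 n := rfl
    rw [this, ackOne]
    exact (Nat.clog_le_iff_le_pow (by norm_num))
  | succ i ih =>
    have hp := lam_prop i
    have iter : ∀ d, 1 ≤ d → ∀ n,
        ((lam (2 * (i + 1)))^[d] n ≤ 1 ↔ n ≤ Ack (i + 2) d) := by
      intro d
      induction d with
      | zero => omega
      | succ d ihd =>
        intro _ n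
        match d, ihd with
        | 0, _ =>
          rw [show Ack (i + 2) 1 = 2 from by rw [Ack],
            show (lam (2 * (i + 1)))^[1] n = lam (2 * (i + 1)) n from rfl]
          rw [ih 1 le_rfl n, show Ack (i + 1) 1 = 2 from by rw [Ack]]
        | d + 1, ihd =>
          rw [Function.iterate_succ_apply]
          rw [ihd (by omega) (lam (2 * (i + 1)) n)]
          rw [ih _ (by have := two_le_ack (i + 2) (d + 1) (by omega); omega) n]
          show n ≤ Ack (i + 1) (Ack (i + 2) (d + 1)) ↔ n ≤ Ack (i + 2) (d + 2)
          rw [show Ack (i + 2) (d + 2) = Ack (i + 1) (Ack (i + 2) (d + 1)) from by rw [Ack]]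
    intro d hd n
    rw [lam_succ i, fstar_le_iff hp.1 hp.2]
    exact iter d hd n

theorem stmt_8 : ∀ i : ℕ, 1 ≤ i → ∀ d : ℕ, 1 ≤ d →
    IsGreatest {n : ℕ | lam (2 * i) n ≤ d} (Ack i d) := by
  intro i hi d hd
  obtain ⟨j, rfl⟩ := Nat.exists_eq_add_of_le hi
  rw [Nat.add_comm]
  exact ⟨(key j d hd _).mpr le_rfl, fun n hn => (key j d hd n).mp hn⟩
end

section
/- Let c > 0 be a constant. For all sufficiently large d (depending only on c), λ_d(⌈c · d · 2^{d/2}⌉) ≤ d. -/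
/-- A "good" shrinking function. -/
def GoodF (f : ℕ → ℕ) : Prop :=
  Monotone f ∧ (∀ m, m ≤ 1 → f m ≤ 1) ∧ (∀ m, 2 ≤ m → 1 ≤ f m ∧ f m < m)

lemma fstar_le {f : ℕ → ℕ} {n i : ℕ} (h : f^[i] n ≤ 1) : fstar f n ≤ i :=
  Nat.sInf_le h

lemma iter_le_one_aux {f : ℕ → ℕ} (hf : GoodF f) :
    ∀ k n, n ≤ k + 1 → f^[k] n ≤ 1 := by
  intro k
  induction k with
  | zero => intro n hn; simpa using hn
  | succ k ih =>
    intro n hn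
    rw [Function.iterate_succ_apply]
    rcases le_or_gt n 1 with h1 | h1
    · exact ih _ (le_trans (hf.2.1 n h1) (by omega))
    · have := (hf.2.2 n h1).2
      exact ih _ (by omega)

lemma iter_le_one {f : ℕ → ℕ} (hf : GoodF f) (n : ℕ) : f^[n] n ≤ 1 :=
  iter_le_one_aux hf n n (by omega)

lemma fstar_spec {f : ℕ → ℕ} (hf : GoodF f) (n : ℕ) : f^[fstar f n] n ≤ 1 := by
  have h : {i | f^[i] n ≤ 1}.Nonempty := ⟨n, iter_le_one hf n⟩
  exact Nat.sInf_mem h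

lemma fstar_mono {f : ℕ → ℕ} (hf : GoodF f) : Monotone (fstar f) := by
  intro n m h
  exact fstar_le (le_trans (hf.1.iterate _ h) (fstar_spec hf m))

lemma fstar_succ_le {f : ℕ → ℕ} (hf : GoodF f) (n : ℕ) :
    fstar f n ≤ fstar f (f n) + 1 := by
  apply fstar_le
  rw [Function.iterate_add_apply]
  simpa using fstar_spec hf (f n)

lemma fstar_small_s10 {f : ℕ → ℕ} (hf : GoodF f) {n : ℕ} (hn : n ≤ 1) :
    fstar f n = 0 :=
  Nat.le_zero.mp (fstar_le (by simpa using hn))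

lemma fstar_lt_s10 {f : ℕ → ℕ} (hf : GoodF f) :
    ∀ m, 2 ≤ m → fstar f m ≤ f m ∧ fstar f m < m := by
  intro m
  induction m using Nat.strong_induction_on with
  | _ m ih =>
    intro hm
    have h1 := fstar_succ_le hf m
    rcases le_or_gt (f m) 1 with h2 | h2
    · have h0 : fstar f (f m) = 0 := fstar_small_s10 hf h2
      have hfm := (hf.2.2 m hm).1
      omega
    · have hlt := (hf.2.2 m hm).2
      have := ih (f m) hlt h2
      omega

lemma fstar_pos {f : ℕ → ℕ} (hf : GoodF f) {m : ℕ} (hm : 2 ≤ m) :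
    1 ≤ fstar f m := by
  by_contra h
  have h0 : fstar f m = 0 := by omega
  have := fstar_spec hf m
  rw [h0] at this
  simp at this
  omega

lemma goodF_fstar {f : ℕ → ℕ} (hf : GoodF f) : GoodF (fstar f) := by
  refine ⟨fstar_mono hf, fun m hm => by simp [fstar_small_s10 hf hm], fun m hm => ?_⟩
  exact ⟨fstar_pos hf hm, (fstar_lt_s10 hf m hm).2⟩

lemma goodF_sqrt : GoodF Nat.sqrt := by
  refine ⟨fun a b h => Nat.sqrt_le_sqrt h, fun m hm => ?_, fun m hm => ?_⟩
  · interval_cases m <;> simp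
  · constructor
    · have : 0 < Nat.sqrt m := Nat.sqrt_pos.mpr (by omega)
      omega
    · exact Nat.sqrt_lt_self (by omega)

lemma goodF_clog : GoodF (Nat.clog 2) := by
  refine ⟨fun a b h => Nat.clog_mono_right 2 h, fun m hm => ?_, fun m hm => ?_⟩
  · interval_cases m <;> simp
  · constructor
    · exact Nat.clog_pos (by norm_num) hm
    · have h2 : m ≤ 2 ^ (m - 1) := by
        have := Nat.lt_two_pow_self (n := m - 1)
        omega
      have := (Nat.clog_le_iff_le_pow (by norm_num)).mpr h2
      omega

lemma goodF_lam : ∀ d, GoodF (lam (d + 1))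
  | 0 => goodF_sqrt
  | 1 => goodF_clog
  | (d + 2) => goodF_fstar (goodF_lam d)

lemma iter_le_iter {f g : ℕ → ℕ} (hfg : ∀ n, f n ≤ g n) (hf : Monotone f) :
    ∀ i n, f^[i] n ≤ g^[i] n := by
  intro i
  induction i with
  | zero => intro n; simp
  | succ i ih =>
    intro n
    rw [Function.iterate_succ_apply', Function.iterate_succ_apply']
    exact le_trans (hf (ih n)) (hfg _)

lemma fstar_le_fstar {f g : ℕ → ℕ} (hfg : ∀ n, f n ≤ g n) (hf : Monotone f)
    (hg : GoodF g) (n : ℕ) : fstar f n ≤ fstar g n :=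
  fstar_le (le_trans (iter_le_iter hfg hf _ n) (fstar_spec hg n))

lemma fstar_le_f {f : ℕ → ℕ} (hf : GoodF f) (n : ℕ) : fstar f n ≤ f n := by
  rcases le_or_gt n 1 with h | h
  · simp [fstar_small_s10 hf h]
  · exact (fstar_lt_s10 hf n h).1

lemma lam_step : ∀ d n, lam (d + 3) n ≤ lam (d + 1) n
  | 0, n => fstar_le_f goodF_sqrt n
  | 1, n => fstar_le_f goodF_clog n
  | (d + 2), n =>
    fstar_le_fstar (lam_step d) (goodF_lam (d + 2)).1 (goodF_lam d) n

lemma lam_le_34 : ∀ d n, lam (d + 3) n ≤ max (lam 3 n) (lam 4 n)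
  | 0, n => le_max_left _ _
  | 1, n => le_max_right _ _
  | (d + 2), n => le_trans (lam_step (d + 2) n) (lam_le_34 d n)

lemma sqrt_iter : ∀ k n, n < 2 ^ 2 ^ k → Nat.sqrt^[k] n ≤ 1 := by
  intro k
  induction k with
  | zero => intro n h; simpa using Nat.lt_succ_iff.mp (by simpa using h)
  | succ k ih =>
    intro n h
    rw [Function.iterate_succ_apply]
    apply ih
    rw [Nat.sqrt_lt']
    calc n < 2 ^ 2 ^ (k + 1) := h
    _ = (2 ^ 2 ^ k) ^ 2 := by rw [← pow_mul]; ring_nf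
    _ ≤ (2 ^ 2 ^ k) ^ 2 := le_rfl

lemma clog_iter : ∀ k n, n ≤ 2 ^ 2 ^ k → (Nat.clog 2)^[k] n ≤ 2 := by
  intro k
  induction k with
  | zero => intro n h; simpa using h
  | succ k ih =>
    intro n h
    rw [Function.iterate_succ_apply]
    apply ih
    have h1 : Nat.clog 2 n ≤ 2 ^ (k + 1) := (Nat.clog_le_iff_le_pow (by norm_num)).mpr h
    calc Nat.clog 2 n ≤ 2 ^ (k + 1) := h1
    _ ≤ 2 ^ 2 ^ k := Nat.pow_le_pow_right (by norm_num) (by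
        have := Nat.lt_two_pow_self (n := k); omega)

lemma lam3_le (k n : ℕ) (h : n < 2 ^ 2 ^ k) : lam 3 n ≤ k :=
  fstar_le (sqrt_iter k n h)

lemma lam4_le (k n : ℕ) (h : n ≤ 2 ^ 2 ^ k) : lam 4 n ≤ k + 2 := by
  have key : (Nat.clog 2)^[2 + k] n ≤ 1 := by
    rw [Function.iterate_add_apply]
    have h2 : (Nat.clog 2)^[k] n ≤ 2 := clog_iter k n h
    have h3 : (Nat.clog 2)^[2] ((Nat.clog 2)^[k] n) ≤ (Nat.clog 2)^[2] 2 :=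
      (goodF_clog.1.iterate 2) h2
    refine le_trans h3 ?_
    simp only [Function.iterate_succ_apply, Function.iterate_zero_apply]
    have e2 : Nat.clog 2 2 ≤ 1 := (Nat.clog_le_iff_le_pow (by norm_num)).mpr (by norm_num)
    have e3 : Nat.clog 2 (Nat.clog 2 2) ≤ Nat.clog 2 1 := Nat.clog_mono_right 2 e2
    simp [Nat.clog_one_right] at e3
    omega
  have h5 : lam 4 n ≤ 2 + k := fstar_le key
  omega

lemma sq_le_two_pow : ∀ m, 4 ≤ m → m ^ 2 ≤ 2 ^ m := by
  intro m hm
  induction m, hm using Nat.le_induction with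
  | base => norm_num
  | succ m hm ih =>
    have h2 : 2 * m + 1 ≤ m ^ 2 := by nlinarith
    calc (m + 1) ^ 2 = m ^ 2 + (2 * m + 1) := by ring
    _ ≤ 2 ^ m + 2 ^ m := by omega
    _ = 2 ^ (m + 1) := by ring

theorem stmt_10 (c : ℝ) (hc : 0 < c) :
    ∃ D : ℕ, ∀ d : ℕ, D ≤ d →
      lam d ⌈c * d * (2 : ℝ) ^ ((d : ℝ) / 2)⌉₊ ≤ d := by
  refine ⟨4 * ⌈c⌉₊ + 64, fun d hd => ?_⟩
  have hd64 : 64 ≤ d := by omega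
  have hcd : 4 * c ≤ d := by
    have h1 : c ≤ ⌈c⌉₊ := Nat.le_ceil c
    have h2 : (4 * ⌈c⌉₊ + 64 : ℕ) ≤ (d : ℝ) := by exact_mod_cast hd
    push_cast at h2
    linarith
  set n := ⌈c * d * (2 : ℝ) ^ ((d : ℝ) / 2)⌉₊ with hn
  -- the key real bound : n ≤ 2 ^ (d - 1)
  set m : ℕ := d / 2 - 3 with hm
  have hdn2a : 2 * (d / 2) ≤ d := by omega
  have hdn2b : d ≤ 2 * (d / 2) + 1 := by omega
  have hm4 : 4 ≤ m := by omega
  have hdr : (64 : ℝ) ≤ d := by exact_mod_cast hd64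
  have hmr : (d : ℝ) / 4 ≤ (m : ℝ) := by
    have h1 : d ≤ 2 * m + 7 := by omega
    have h2 : (d : ℝ) ≤ 2 * m + 7 := by exact_mod_cast h1
    linarith
  have hmup : (m : ℝ) + 2 ≤ (d : ℝ) / 2 - 1 := by
    have : 2 * m + 6 ≤ d := by omega
    have := (Nat.cast_le (α := ℝ)).mpr this
    push_cast at this
    linarith
  have key : c * d ≤ (2 : ℝ) ^ ((d : ℝ) / 2 - 1) := by
    have h1 : c * d ≤ 4 * (m : ℝ) ^ 2 := by nlinarith
    have h2 : (m : ℝ) ^ 2 ≤ (2 : ℝ) ^ m := by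
      exact_mod_cast Nat.cast_le.mpr (sq_le_two_pow m hm4)
    have h3 : (4 : ℝ) * 2 ^ m = (2 : ℝ) ^ (m + 2 : ℕ) := by ring
    have h4 : (2 : ℝ) ^ (m + 2 : ℕ) = (2 : ℝ) ^ ((m + 2 : ℕ) : ℝ) :=
      (Real.rpow_natCast 2 (m + 2)).symm
    have h5 : (2 : ℝ) ^ ((m + 2 : ℕ) : ℝ) ≤ (2 : ℝ) ^ ((d : ℝ) / 2 - 1) := by
      apply Real.rpow_le_rpow_of_exponent_le (by norm_num)
      push_cast
      linarith
    calc c * d ≤ 4 * (m : ℝ) ^ 2 := h1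
    _ ≤ 4 * 2 ^ m := by linarith
    _ = (2 : ℝ) ^ ((m + 2 : ℕ) : ℝ) := by rw [← h4, ← h3]
    _ ≤ _ := h5
  have hreal : c * d * (2 : ℝ) ^ ((d : ℝ) / 2) ≤ (2 : ℝ) ^ ((d : ℝ) - 1) := by
    have hpos : (0 : ℝ) < (2 : ℝ) ^ ((d : ℝ) / 2) := Real.rpow_pos_of_pos (by norm_num) _
    have := mul_le_mul_of_nonneg_right key hpos.le
    calc c * d * (2 : ℝ) ^ ((d : ℝ) / 2)
        ≤ (2 : ℝ) ^ ((d : ℝ) / 2 - 1) * (2 : ℝ) ^ ((d : ℝ) / 2) := this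
    _ = (2 : ℝ) ^ ((d : ℝ) - 1) := by
        rw [← Real.rpow_add (by norm_num)]
        ring_nf
  have hn_le : n ≤ 2 ^ (d - 1) := by
    rw [hn, Nat.ceil_le]
    calc c * d * (2 : ℝ) ^ ((d : ℝ) / 2) ≤ (2 : ℝ) ^ ((d : ℝ) - 1) := hreal
    _ = ((2 ^ (d - 1) : ℕ) : ℝ) := by
        push_cast
        rw [← Real.rpow_natCast 2 (d - 1)]
        congr 1
        have : (1 : ℕ) ≤ d := by omega
        push_cast [Nat.cast_sub this]
        ring
  have hn_lt : n < 2 ^ d := lt_of_le_of_lt hn_le (Nat.pow_lt_pow_right (by norm_num) (by omega))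
  -- choose k = clog 2 d
  set k : ℕ := Nat.clog 2 d with hk
  have hdk : d ≤ 2 ^ k := Nat.le_pow_clog (by norm_num) d
  have hnk : n < 2 ^ 2 ^ k :=
    lt_of_lt_of_le hn_lt (Nat.pow_le_pow_right (by norm_num) hdk)
  have hk2 : k + 2 ≤ d := by
    obtain ⟨e, he⟩ : ∃ e, d = e + 2 := ⟨d - 2, by omega⟩
    have h2 : e ^ 2 ≤ 2 ^ e := sq_le_two_pow e (by omega)
    have h1 : d ≤ 2 ^ e := by nlinarith
    have h3 := (Nat.clog_le_iff_le_pow (b := 2) (by norm_num)).mpr h1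
    omega
  have h34 : lam d n ≤ max (lam 3 n) (lam 4 n) := by
    have hd3 : d = (d - 3) + 3 := by omega
    rw [hd3]
    exact lam_le_34 (d - 3) n
  have h3 : lam 3 n ≤ k := lam3_le k n hnk
  have h4 : lam 4 n ≤ k + 2 := lam4_le k n hnk.le
  calc lam d n ≤ max (lam 3 n) (lam 4 n) := h34
  _ ≤ k + 2 := by omega
  _ ≤ d := hk2
end
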